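/- arXiv:2207.12288 — 3 statements merged into one kernel-verified Lean document; each statement's English description precedes it below -/
import Mathlib

section
/- Let X be an inner product space and let {(x_{l,k})_{k∈ℕ} : l ∈ ℕ} be a countable collection of sequences in X with ‖x_{l,k}‖ ≤ 1 for all l, k, such that for each l the weak limit x_l := lim_{k→∞} x_{l,k} exists. Then every sequence N_k → ∞ of natural numbers has a subsequence (N'_k) such that for every further subsequence (N''_k) of (N'_k) and every l, the Cesàro averages (1/K) ∑_{k=1}^K x_{l,N''_k} converge to x_l in norm as K → ∞. -/
open Filter Finset Topology

theorem stmt2 {E : Type*} [NormedAddCommGroup E] [InnerProductSpace ℂ E]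
    (x : ℕ → ℕ → E) (hbd : ∀ l k, ‖x l k‖ ≤ 1) (xlim : ℕ → E)
    (hweak : ∀ l (y : E),
      Tendsto (fun k => (inner ℂ (x l k) y : ℂ)) atTop (𝓝 (inner ℂ (xlim l) y)))
    (N : ℕ → ℕ) (hN : Tendsto N atTop atTop) :
    ∃ φ : ℕ → ℕ, StrictMono φ ∧
      ∀ ψ : ℕ → ℕ, StrictMono ψ → ∀ l,
        Tendsto (fun K : ℕ => (K : ℝ)⁻¹ • ∑ k ∈ Finset.Icc 1 K, x l (N (φ (ψ k))))
          atTop (𝓝 (xlim l)) := by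
  -- the weak limits are bounded by 1
  have hxlim : ∀ l, ‖xlim l‖ ≤ 1 := by
    intro l
    rcases eq_or_ne (xlim l) 0 with h | h
    · simp [h]
    · have h1 : Tendsto (fun k => ‖(inner ℂ (x l k) (xlim l) : ℂ)‖) atTop
        (𝓝 ‖(inner ℂ (xlim l) (xlim l) : ℂ)‖) := (hweak l (xlim l)).norm
      have h2 : ‖(inner ℂ (xlim l) (xlim l) : ℂ)‖ ≤ ‖xlim l‖ := by
        refine le_of_tendsto h1 (Eventually.of_forall fun k => ?_)
        calc ‖(inner ℂ (x l k) (xlim l) : ℂ)‖ ≤ ‖x l k‖ * ‖xlim l‖ := norm_inner_le_norm _ _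
          _ ≤ 1 * ‖xlim l‖ := by
              have := hbd l k
              gcongr
          _ = ‖xlim l‖ := one_mul _
      rw [inner_self_eq_norm_sq_to_K] at h2
      simp only [norm_pow, RCLike.norm_ofReal, Complex.norm_real, norm_norm, abs_norm] at h2
      have hpos : 0 < ‖xlim l‖ := norm_pos_iff.mpr h
      nlinarith
  set g : ℕ → ℕ → E := fun l n => x l n - xlim l with hgdef
  have hgbd : ∀ l n, ‖g l n‖ ≤ 2 := by
    intro l n
    have := norm_sub_le (x l n) (xlim l)
    have h1 := hbd l n
    have h2 := hxlim l
    simp only [hgdef]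
    linarith
  have hg : ∀ l (y : E), Tendsto (fun n => (inner ℂ (g l (N n)) y : ℂ)) atTop (𝓝 0) := by
    intro l y
    have h1 : Tendsto (fun k => (inner ℂ (x l k) y : ℂ) - inner ℂ (xlim l) y) atTop (𝓝 0) := by
      simpa using (hweak l y).sub_const (inner ℂ (xlim l) y : ℂ)
    have h2 := h1.comp hN
    simpa [hgdef, Function.comp_def, inner_sub_left] using h2
  -- key recursive choice
  have key : ∀ p k : ℕ, ∃ n, p < n ∧ ∀ l ≤ k, ∀ j ≤ p,
      ‖(inner ℂ (g l (N n)) (g l (N j)) : ℂ)‖ ≤ (1/4 : ℝ)^k := by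
    intro p k
    have hev : ∀ᶠ n in atTop, ∀ l ∈ Finset.range (k+1), ∀ j ∈ Finset.range (p+1),
        ‖(inner ℂ (g l (N n)) (g l (N j)) : ℂ)‖ ≤ (1/4 : ℝ)^k := by
      rw [eventually_all_finset]
      intro l _
      rw [eventually_all_finset]
      intro j _
      have h1 := (hg l (g l (N j))).norm
      simp only [norm_zero] at h1
      exact h1.eventually_le_const (by positivity)
    rcases (hev.and (eventually_gt_atTop p)).exists with ⟨n, h1, h2⟩
    exact ⟨n, h2, fun l hl j hj =>
      h1 l (Finset.mem_range.mpr (Nat.lt_succ_of_le hl)) j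
        (Finset.mem_range.mpr (Nat.lt_succ_of_le hj))⟩
  choose f hf1 hf2 using key
  set φ : ℕ → ℕ := fun k => Nat.rec (motive := fun _ => ℕ) 0 (fun k ih => f ih (k+1)) k
    with hφdef
  have hφsucc : ∀ k, φ (k+1) = f (φ k) (k+1) := fun k => rfl
  have hmono : StrictMono φ := by
    apply strictMono_nat_of_lt_succ
    intro k
    rw [hφsucc]
    exact hf1 (φ k) (k+1)
  have hpair : ∀ a b l : ℕ, a < b → l ≤ b →
      ‖(inner ℂ (g l (N (φ b))) (g l (N (φ a))) : ℂ)‖ ≤ (1/4 : ℝ)^b := by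
    intro a b l hab hlb
    obtain ⟨m, rfl⟩ : ∃ m, b = m + 1 := ⟨b - 1, by omega⟩
    rw [hφsucc]
    exact hf2 (φ m) (m+1) l hlb (φ a) (hmono.monotone (by omega))
  refine ⟨φ, hmono, fun ψ hψ l => ?_⟩
  set v : ℕ → E := fun k => g l (N (φ (ψ k))) with hv
  set S : ℕ → E := fun K => ∑ k ∈ Finset.Icc 1 K, v k with hSdef
  have hvbd : ∀ k, ‖v k‖ ≤ 2 := fun k => hgbd l _
  have hcross : ∀ j k : ℕ, j < k → l ≤ k → ‖(inner ℂ (v k) (v j) : ℂ)‖ ≤ (1/4 : ℝ)^k := by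
    intro j k hjk hlk
    have h1 := hpair (ψ j) (ψ k) l (hψ hjk) (hlk.trans hψ.le_apply)
    exact h1.trans (pow_le_pow_of_le_one (by norm_num) (by norm_num) hψ.le_apply)
  have hSbound : ∀ K : ℕ, ‖S K‖^2 ≤ 4*(l:ℝ)^2 + 6*K := by
    intro K
    induction K with
    | zero =>
      have : S 0 = 0 := by simp [hSdef]
      rw [this]
      simp
    | succ K ih =>
      have hstep : S (K+1) = S K + v (K+1) := by
        simp only [hSdef]
        rw [Finset.sum_Icc_succ_top (by omega : 1 ≤ K+1)]
      by_cases hl : l ≤ K + 1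
      · have h1 : ‖(inner ℂ (S K) (v (K+1)) : ℂ)‖ ≤ (K : ℝ) * (1/4 : ℝ)^(K+1) := by
          simp only [hSdef]
          rw [sum_inner]
          refine (norm_sum_le _ _).trans ?_
          have hb : ∀ j ∈ Finset.Icc 1 K, ‖(inner ℂ (v j) (v (K+1)) : ℂ)‖ ≤ (1/4 : ℝ)^(K+1) := by
            intro j hj
            rw [norm_inner_symm]
            exact hcross j (K+1) ((Finset.mem_Icc.mp hj).2.trans_lt (Nat.lt_succ_self K)) hl
          refine (Finset.sum_le_sum hb).trans ?_
          rw [Finset.sum_const, Nat.card_Icc]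
          simp [nsmul_eq_mul]
        have h2 : (K : ℝ) * (1/4 : ℝ)^(K+1) ≤ 1 := by
          have hK : (K : ℝ) ≤ 4 ^ K := by
            exact_mod_cast (Nat.lt_pow_self (n := K) (by norm_num : 1 < 4)).le
          have h3 : (K : ℝ) * (1/4)^(K+1) ≤ 4^K * (1/4)^(K+1) :=
            mul_le_mul_of_nonneg_right hK (by positivity)
          refine h3.trans ?_
          rw [one_div, inv_pow, ← div_eq_mul_inv, div_le_one (by positivity)]
          exact pow_le_pow_right₀ (by norm_num) (by omega)
        have hre : RCLike.re (inner ℂ (S K) (v (K+1)) : ℂ) ≤ 1 :=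
          (RCLike.re_le_norm _).trans (h1.trans h2)
        have hv2 : ‖v (K+1)‖^2 ≤ 4 := by nlinarith [hvbd (K+1), norm_nonneg (v (K+1))]
        have hexp : ‖S (K+1)‖^2
            = ‖S K‖^2 + 2 * RCLike.re (inner ℂ (S K) (v (K+1)) : ℂ) + ‖v (K+1)‖^2 := by
          rw [hstep, @norm_add_sq ℂ]
        rw [hexp]
        push_cast
        nlinarith
      · have h1 : ‖S (K+1)‖ ≤ 2 * ((K:ℝ)+1) := by
          calc ‖S (K+1)‖ ≤ ∑ k ∈ Finset.Icc 1 (K+1), ‖v k‖ := norm_sum_le _ _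
            _ ≤ ∑ _k ∈ Finset.Icc 1 (K+1), (2:ℝ) := Finset.sum_le_sum fun k _ => hvbd k
            _ = 2 * ((K:ℝ)+1) := by
                rw [Finset.sum_const, Nat.card_Icc]
                push_cast
                ring
        have h2 : ((K:ℝ)+1) ≤ l := by exact_mod_cast Nat.succ_le_of_lt (by omega)
        have h0 : (0:ℝ) ≤ ‖S (K+1)‖ := norm_nonneg _
        push_cast
        nlinarith
  have hzero : Tendsto (fun K : ℕ => (K:ℝ)⁻¹ • S K) atTop (𝓝 0) := by
    rw [tendsto_zero_iff_norm_tendsto_zero]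
    have hb : ∀ K : ℕ, 1 ≤ K → ‖(K:ℝ)⁻¹ • S K‖^2 ≤ 4*(l:ℝ)^2/(K:ℝ)^2 + 6/(K:ℝ) := by
      intro K hK
      have hKpos : (0:ℝ) < K := by exact_mod_cast hK
      rw [norm_smul, norm_inv, Real.norm_natCast, mul_pow]
      calc ((K:ℝ)⁻¹)^2 * ‖S K‖^2 ≤ ((K:ℝ)⁻¹)^2 * (4*(l:ℝ)^2 + 6*K) := by
            have := hSbound K
            gcongr
        _ = 4*(l:ℝ)^2/(K:ℝ)^2 + 6/(K:ℝ) := by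
            field_simp
    have hsq : Tendsto (fun K : ℕ => ‖(K:ℝ)⁻¹ • S K‖^2) atTop (𝓝 0) := by
      have t1 : Tendsto (fun K : ℕ => 4*(l:ℝ)^2/(K:ℝ)^2 + 6/(K:ℝ)) atTop (𝓝 0) := by
        have ta : Tendsto (fun K : ℕ => (4*(l:ℝ)^2/(K:ℝ)) * (1/(K:ℝ))) atTop (𝓝 (0*0)) :=
          (tendsto_const_div_atTop_nhds_zero_nat _).mul
            (tendsto_const_div_atTop_nhds_zero_nat 1)
        have tb : Tendsto (fun K : ℕ => 4*(l:ℝ)^2/(K:ℝ)^2) atTop (𝓝 0) := by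
          have heq2 : ∀ K : ℕ, 4*(l:ℝ)^2/(K:ℝ) * (1/(K:ℝ)) = 4*(l:ℝ)^2/(K:ℝ)^2 := fun K => by
            ring
          simpa using ta.congr heq2
        have tc : Tendsto (fun K : ℕ => 6/(K:ℝ)) atTop (𝓝 0) :=
          tendsto_const_div_atTop_nhds_zero_nat 6
        simpa using tb.add tc
      exact squeeze_zero' (Eventually.of_forall fun K => by positivity)
        ((eventually_ge_atTop 1).mono hb) t1
    have hsqrt : Tendsto (fun K : ℕ => Real.sqrt (‖(K:ℝ)⁻¹ • S K‖^2)) atTop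
        (𝓝 (Real.sqrt 0)) := (Real.continuous_sqrt.tendsto 0).comp hsq
    have heq : (fun K : ℕ => Real.sqrt (‖(K:ℝ)⁻¹ • S K‖^2))
        = fun K : ℕ => ‖(K:ℝ)⁻¹ • S K‖ := by
      funext K
      exact Real.sqrt_sq (norm_nonneg _)
    rw [heq] at hsqrt
    simpa using hsqrt
  have heq : ∀ᶠ K : ℕ in atTop, (K:ℝ)⁻¹ • ∑ k ∈ Finset.Icc 1 K, x l (N (φ (ψ k)))
      = (K:ℝ)⁻¹ • S K + xlim l := by
    filter_upwards [eventually_ge_atTop 1] with K hK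
    have hKne : ((K:ℝ)) ≠ 0 := by
      have : (0:ℝ) < K := by exact_mod_cast hK
      exact this.ne'
    have hsum : ∑ k ∈ Finset.Icc 1 K, x l (N (φ (ψ k))) = S K + (K:ℝ) • xlim l := by
      simp only [hSdef, hv, hgdef]
      rw [Finset.sum_sub_distrib, Finset.sum_const, Nat.card_Icc]
      simp only [Nat.add_sub_cancel]
      rw [← Nat.cast_smul_eq_nsmul ℝ]
      abel
    rw [hsum, smul_add, smul_smul, inv_mul_cancel₀ hKne, one_smul]
  have hfin : Tendsto (fun K : ℕ => (K:ℝ)⁻¹ • S K + xlim l) atTop (𝓝 (0 + xlim l)) :=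
    hzero.add tendsto_const_nhds
  rw [zero_add] at hfin
  exact hfin.congr' (by filter_upwards [heq] with K hK using hK.symm)
end

section
/- Let X be an inner product space and (x_k) a sequence in X with ‖x_k‖ ≤ 1 for all k and weak limit 0. Then there exists a subsequence (x_{k_n}) such that ‖(1/K)∑_{n=1}^K x_{k_n}‖² ≤ 3/K for every K ∈ ℕ. -/
open Filter Finset Topology

theorem stmt3 {E : Type*} [NormedAddCommGroup E] [InnerProductSpace ℂ E]
    (x : ℕ → E) (hbd : ∀ k, ‖x k‖ ≤ 1)
    (hweak : ∀ y : E, Tendsto (fun k => (inner ℂ (x k) y : ℂ)) atTop (𝓝 0)) :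
    ∃ k : ℕ → ℕ, StrictMono k ∧
      ∀ K : ℕ, 1 ≤ K →
        ‖(K : ℝ)⁻¹ • ∑ n ∈ Finset.Icc 1 K, x (k n)‖ ^ 2 ≤ 3 / (K : ℝ) := by
  obtain ⟨k, -, hk⟩ := exists_seq_of_forall_finset_exists (fun _ : ℕ => True)
      (fun a b => a < b ∧ ‖(inner ℂ (x b) (x a) : ℂ)‖ ≤ (1/2 : ℝ) ^ (a + 1))
      (by
        intro s _
        have h1 : ∀ᶠ y in atTop, ∀ a ∈ s, a < y ∧ ‖(inner ℂ (x y) (x a) : ℂ)‖ ≤ (1/2 : ℝ) ^ (a + 1) := by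
          rw [eventually_all_finset]
          intro a _
          have h2 : Tendsto (fun y => ‖(inner ℂ (x y) (x a) : ℂ)‖) atTop (𝓝 0) := by
            simpa using (hweak (x a)).norm
          have h3 : ∀ᶠ y in atTop, ‖(inner ℂ (x y) (x a) : ℂ)‖ ≤ (1/2 : ℝ) ^ (a + 1) := by
            filter_upwards [h2.eventually_lt_const (by positivity : (0:ℝ) < (1/2 : ℝ)^(a+1))]
              with y hy using hy.le
          filter_upwards [eventually_gt_atTop a, h3] with y hy1 hy2 using ⟨hy1, hy2⟩
        obtain ⟨y, hy⟩ := h1.exists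
        exact ⟨y, trivial, hy⟩)
  have hmono : StrictMono k := fun m n h => (hk m n h).1
  refine ⟨k, hmono, ?_⟩
  intro K hK
  have hKpos : (0:ℝ) < K := by exact_mod_cast hK
  set S := ∑ n ∈ Finset.Icc 1 K, x (k n) with hS
  -- bound ‖S‖² ≤ 3K
  have key : ‖S‖ ^ 2 ≤ 3 * (K:ℝ) := by
    have hexp : ‖S‖ ^ 2
        = ∑ n ∈ Finset.Icc 1 K, ∑ i ∈ Finset.Icc 1 K,
            ((inner ℂ (x (k n)) (x (k i)) : ℂ)).re := by
      rw [← inner_self_eq_norm_sq (𝕜 := ℂ) S, hS, sum_inner]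
      rw [map_sum]
      refine Finset.sum_congr rfl fun n _ => ?_
      rw [inner_sum, map_sum]
      simp [RCLike.re_to_complex]
    rw [hexp]
    have hterm : ∀ n ∈ Finset.Icc 1 K, ∀ i ∈ Finset.Icc 1 K,
        ((inner ℂ (x (k n)) (x (k i)) : ℂ)).re
          ≤ (1/2:ℝ)^(n+1) + (1/2:ℝ)^(i+1) + (if n = i then (1:ℝ) else 0) := by
      intro n _ i _
      have hpow : ∀ m j : ℕ, m < j →
          ‖(inner ℂ (x (k j)) (x (k m)) : ℂ)‖ ≤ (1/2:ℝ)^(m+1) := by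
        intro m j hmj
        refine le_trans (hk m j hmj).2 ?_
        apply pow_le_pow_of_le_one (by norm_num) (by norm_num)
        have := hmono.le_apply (x := m)
        omega
      rcases lt_trichotomy n i with h | h | h
      · have h1 : ((inner ℂ (x (k n)) (x (k i)) : ℂ)).re
            = ((inner ℂ (x (k i)) (x (k n)) : ℂ)).re := by
          rw [← inner_conj_symm]
          exact Complex.conj_re _
        rw [h1]
        have h2 : ((inner ℂ (x (k i)) (x (k n)) : ℂ)).re ≤ (1/2:ℝ)^(n+1) :=
          (RCLike.re_le_norm (K := ℂ) (inner ℂ (x (k i)) (x (k n)))).trans (hpow n i h)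
        have h3 : (0:ℝ) ≤ (1/2:ℝ)^(i+1) := by positivity
        have h4 : (0:ℝ) ≤ (if n = i then (1:ℝ) else 0) := by positivity
        linarith
      · subst h
        have h1 : ((inner ℂ (x (k n)) (x (k n)) : ℂ)).re = ‖x (k n)‖ ^ 2 :=
          inner_self_eq_norm_sq (𝕜 := ℂ) _
        rw [h1, if_pos rfl]
        have h2 : ‖x (k n)‖ ^ 2 ≤ 1 := by
          have := hbd (k n)
          nlinarith [norm_nonneg (x (k n))]
        have h3 : (0:ℝ) ≤ (1/2:ℝ)^(n+1) := by positivity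
        linarith
      · have h2 := (Complex.re_le_norm _).trans
          (hpow i n h)
        have h3 : (0:ℝ) ≤ (1/2:ℝ)^(n+1) := by positivity
        have h4 : (0:ℝ) ≤ (if n = i then (1:ℝ) else 0) := by positivity
        linarith
    refine le_trans (Finset.sum_le_sum fun n hn =>
      Finset.sum_le_sum fun i hi => hterm n hn i hi) ?_
    -- compute sum of bounds
    have ht : (∑ i ∈ Finset.Icc 1 K, (1/2:ℝ)^(i+1)) ≤ 1 := by
      have hsub : Finset.Icc 1 K ⊆ Finset.range (K+1) := by
        intro i hi
        simp only [Finset.mem_Icc] at hi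
        simp only [Finset.mem_range]
        omega
      have h1 : (∑ i ∈ Finset.Icc 1 K, (1/2:ℝ)^(i+1))
          ≤ ∑ i ∈ Finset.range (K+1), (1/2:ℝ)^(i+1) :=
        Finset.sum_le_sum_of_subset_of_nonneg hsub (fun i _ _ => by positivity)
      have h2 : (∑ i ∈ Finset.range (K+1), (1/2:ℝ)^(i+1))
          = (∑ i ∈ Finset.range (K+1), (1/2:ℝ)^i) * (1/2) := by
        rw [Finset.sum_mul]
        exact Finset.sum_congr rfl fun i _ => pow_succ _ _
      have h3 := sum_geometric_two_le (K+1)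
      calc (∑ i ∈ Finset.Icc 1 K, (1/2:ℝ)^(i+1))
          ≤ (∑ i ∈ Finset.range (K+1), (1/2:ℝ)^i) * (1/2) := h2 ▸ h1
        _ ≤ 2 * (1/2) := by
            apply mul_le_mul_of_nonneg_right h3 (by norm_num)
        _ = 1 := by norm_num
    have hcard : (Finset.Icc 1 K).card = K := by
      rw [Nat.card_Icc]; omega
    have hrow : ∀ n ∈ Finset.Icc 1 K,
        (∑ i ∈ Finset.Icc 1 K,
          ((1/2:ℝ)^(n+1) + (1/2:ℝ)^(i+1) + (if n = i then (1:ℝ) else 0)))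
        ≤ K * (1/2:ℝ)^(n+1) + 1 + 1 := by
      intro n hn
      rw [Finset.sum_add_distrib, Finset.sum_add_distrib, Finset.sum_const, hcard,
        Finset.sum_ite_eq, if_pos hn, nsmul_eq_mul]
      linarith
    calc (∑ n ∈ Finset.Icc 1 K, ∑ i ∈ Finset.Icc 1 K,
          ((1/2:ℝ)^(n+1) + (1/2:ℝ)^(i+1) + (if n = i then (1:ℝ) else 0)))
        ≤ ∑ n ∈ Finset.Icc 1 K, ((K:ℝ) * (1/2:ℝ)^(n+1) + 1 + 1) :=
          Finset.sum_le_sum hrow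
      _ = (K:ℝ) * (∑ n ∈ Finset.Icc 1 K, (1/2:ℝ)^(n+1)) + (K:ℝ) * 2 := by
          rw [Finset.sum_add_distrib, Finset.sum_add_distrib, Finset.sum_const, hcard,
            ← Finset.mul_sum, nsmul_eq_mul]
          ring
      _ ≤ (K:ℝ) * 1 + (K:ℝ) * 2 := by
          have : (K:ℝ) * (∑ n ∈ Finset.Icc 1 K, (1/2:ℝ)^(n+1)) ≤ (K:ℝ) * 1 :=
            mul_le_mul_of_nonneg_left ht (by positivity)
          linarith
      _ = 3 * (K:ℝ) := by ring
  have hns : ‖(K : ℝ)⁻¹ • S‖ ^ 2 = ((K:ℝ)⁻¹)^2 * ‖S‖^2 := by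
    rw [norm_smul, mul_pow, Real.norm_eq_abs, abs_of_nonneg (by positivity)]
  rw [hns]
  calc ((K:ℝ)⁻¹)^2 * ‖S‖^2 ≤ ((K:ℝ)⁻¹)^2 * (3*(K:ℝ)) := by
        apply mul_le_mul_of_nonneg_left key (by positivity)
    _ = 3 / (K:ℝ) := by field_simp
end

section
/- Let (X, 𝒳, μ, T) be a measure-preserving system on a probability space and let χ ∈ L^∞(μ) be a nonergodic eigenfunction of T with eigenvalue λ (i.e. |χ| ∈ {0,1} a.e., λ is T-invariant, λ = 0 where χ = 0, and χ∘T = λ·χ a.e.). Define χ_ℚ := χ·1_{E_ℚ} where E_ℚ = {x : λ(x) = e(q) for some q ∈ ℚ}, and χ_{ℝ∖ℚ} := χ − χ_ℚ. Then χ_ℚ equals the conditional expectation of χ onto the rational Kronecker factor 𝒦_rat(T), and χ_{ℝ∖ℚ} = χ − E(χ|𝒦_rat(T)); in particular both E(χ|𝒦_rat(T)) and χ − E(χ|𝒦_rat(T)) are again nonergodic eigenfunctions of T. -/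
open MeasureTheory Filter Topology ENNReal

noncomputable section

/-- `e2pi r = e(r) = exp(2πir)`. -/
def e2pi (r : ℝ) : ℂ := Complex.exp (2 * (Real.pi : ℂ) * Complex.I * (r : ℂ))

variable {X : Type*} [MeasurableSpace X]

/-- `χ` is a nonergodic eigenfunction of `T` with eigenvalue `lam`. -/
def IsNonergodicEigenfunction (μ : Measure X) (T : X → X) (χ lam : X → ℂ) : Prop :=
  (∀ᵐ x ∂μ, χ x = 0 ∨ ‖χ x‖ = 1) ∧
  (∀ᵐ x ∂μ, lam (T x) = lam x) ∧
  (∀ᵐ x ∂μ, χ x = 0 → lam x = 0) ∧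
  (∀ᵐ x ∂μ, χ (T x) = lam x * χ x)

/-- The rational eigenfunctions of `T` lying in `L²(μ)`. -/
def RatEig (μ : Measure X) (T : X → X) : Set (X → ℂ) :=
  {g | MemLp g 2 μ ∧ ∃ q : ℚ, ∀ᵐ x ∂μ, g (T x) = e2pi (q : ℝ) * g x}

/-- `f` belongs to the rational Kronecker factor `𝒦_rat(T)`, i.e. `f` is an
`L²(μ)`-limit of linear combinations of rational eigenfunctions of `T`. -/
def InKrat (μ : Measure X) (T : X → X) (f : X → ℂ) : Prop :=
  ∀ ε : ℝ, 0 < ε → ∃ g ∈ Submodule.span ℂ (RatEig μ T),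
    eLpNorm (fun x => f x - g x) 2 μ < ENNReal.ofReal ε

lemma e2pi_abs (r : ℝ) : ‖e2pi r‖ = 1 := by
  rw [e2pi, Complex.norm_exp]
  norm_num [Complex.mul_re, Complex.mul_im]

lemma conj_e2pi_mul (r : ℝ) : e2pi r * (starRingEnd ℂ) (e2pi r) = 1 := by
  rw [Complex.mul_conj]
  norm_cast
  rw [← Complex.sq_norm, e2pi_abs]; norm_num

lemma cesaro (z : ℂ) (hz : ‖z‖ ≤ 1) (hz1 : z ≠ 1) :
    Tendsto (fun N : ℕ => (N:ℂ)⁻¹ * ∑ n ∈ Finset.range N, z^n) atTop (𝓝 0) := by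
  refine squeeze_zero_norm (a := fun N : ℕ => (N:ℝ)⁻¹ * (2 / ‖z - 1‖)) (fun N => ?_) ?_
  · rw [geom_sum_eq hz1, norm_mul, norm_inv, Complex.norm_natCast, div_eq_mul_inv, norm_mul,
      norm_inv, div_eq_mul_inv]
    gcongr
    calc ‖z ^ N - 1‖ ≤ ‖z ^ N‖ + ‖(1:ℂ)‖ := norm_sub_le _ _
    _ ≤ 2 := by
        rw [norm_pow, norm_one]
        nlinarith [pow_le_one₀ (norm_nonneg z) hz (n := N), pow_nonneg (norm_nonneg z) N]
  · simpa using (tendsto_inv_atTop_nhds_zero_nat).mul_const (2 / ‖z - 1‖)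


lemma indicator_eigen {μ : Measure X} {T : X → X} {χ lam : X → ℂ}
    (heig : IsNonergodicEigenfunction μ T χ lam) (F : Set X)
    (hF : ∀ x, lam (T x) = lam x → (x ∈ F ↔ T x ∈ F)) :
    IsNonergodicEigenfunction μ T (F.indicator χ) (F.indicator lam) := by
  obtain ⟨h1, h2, h3, h4⟩ := heig
  refine ⟨?_, ?_, ?_, ?_⟩
  · filter_upwards [h1] with x hx
    by_cases hxF : x ∈ F
    · simpa [Set.indicator_of_mem hxF] using hx
    · simp [Set.indicator_of_notMem hxF]
  · filter_upwards [h2] with x hx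
    by_cases hxF : x ∈ F
    · rw [Set.indicator_of_mem ((hF x hx).1 hxF), Set.indicator_of_mem hxF, hx]
    · rw [Set.indicator_of_notMem hxF, Set.indicator_of_notMem (fun h => hxF ((hF x hx).2 h))]
  · filter_upwards [h3] with x hx
    by_cases hxF : x ∈ F
    · rw [Set.indicator_of_mem hxF, Set.indicator_of_mem hxF]; exact hx
    · simp [Set.indicator_of_notMem hxF]
  · filter_upwards [h2, h4] with x hx2 hx4
    by_cases hxF : x ∈ F
    · rw [Set.indicator_of_mem ((hF x hx2).1 hxF), Set.indicator_of_mem hxF,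
        Set.indicator_of_mem hxF, hx4]
    · rw [Set.indicator_of_notMem (fun h => hxF ((hF x hx2).2 h)),
        Set.indicator_of_notMem hxF, Set.indicator_of_notMem hxF, mul_zero]

lemma indicator_mem_ratEig (μ : Measure X) [IsProbabilityMeasure μ] (T : X → X)
    (χ lam' : X → ℂ)
    (hχm : AEStronglyMeasurable χ μ) (hb : ∀ᵐ x ∂μ, ‖χ x‖ ≤ 1)
    (hinv : ∀ᵐ x ∂μ, lam' (T x) = lam' x) (hχT : ∀ᵐ x ∂μ, χ (T x) = lam' x * χ x)
    (D : Set X) (hDm : MeasurableSet D) (q : ℚ)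
    (hD : ∀ x, lam' (T x) = lam' x → (x ∈ D ↔ T x ∈ D))
    (hDq : ∀ x ∈ D, lam' x = e2pi (q : ℝ)) :
    D.indicator χ ∈ RatEig μ T := by
  constructor
  · refine MemLp.of_bound (hχm.indicator hDm) 1 ?_
    filter_upwards [hb] with x hx
    by_cases h : x ∈ D
    · rwa [Set.indicator_of_mem h]
    · simp [Set.indicator_of_notMem h]
  · refine ⟨q, ?_⟩
    filter_upwards [hinv, hχT] with x h1 h2
    by_cases h : x ∈ D
    · rw [Set.indicator_of_mem ((hD x h1).1 h), Set.indicator_of_mem h, h2, hDq x h]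
    · rw [Set.indicator_of_notMem (fun hh => h ((hD x h1).2 hh)),
        Set.indicator_of_notMem h, mul_zero]

lemma stmt7_part1 (μ : Measure X) [IsProbabilityMeasure μ] (T : X → X)
    (hT : MeasurePreserving T μ μ) (χ lam : X → ℂ)
    (hχ : MemLp χ ⊤ μ) (hlam : AEStronglyMeasurable lam μ)
    (heig : IsNonergodicEigenfunction μ T χ lam) :
    InKrat μ T (Set.indicator {x | ∃ q : ℚ, lam x = e2pi (q : ℝ)} χ) := by
  obtain ⟨h1, h2, h3, h4⟩ := heig
  have hb : ∀ᵐ x ∂μ, ‖χ x‖ ≤ 1 := by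
    filter_upwards [h1] with x hx
    rcases hx with h | h
    · simp [h]
    · simp [h]
  set lam' : X → ℂ := hlam.mk lam with hlam'def
  have hl : lam =ᵐ[μ] lam' := hlam.ae_eq_mk
  have hl'm : StronglyMeasurable lam' := hlam.stronglyMeasurable_mk
  have hlT : (fun x => lam (T x)) =ᵐ[μ] fun x => lam' (T x) :=
    hT.quasiMeasurePreserving.tendsto_ae.eventually hl
  have hinv' : ∀ᵐ x ∂μ, lam' (T x) = lam' x := by
    filter_upwards [h2, hl, hlT] with x e1 e2 e3
    rw [← e3, e1, e2]
  have hχT' : ∀ᵐ x ∂μ, χ (T x) = lam' x * χ x := by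
    filter_upwards [h4, hl] with x e1 e2
    rw [e1, e2]
  -- enumeration of ℚ
  set r : ℕ → ℚ := fun n => (Denumerable.eqv ℚ).symm n with hrdef
  have hrsurj : Function.Surjective r := (Denumerable.eqv ℚ).symm.surjective
  set V : ℕ → Set X := fun n => {x | ∃ m, m < n ∧ lam' x = e2pi ((r m : ℝ))} with hVdef
  have hVmeas : ∀ n, MeasurableSet (V n) := by
    intro n
    have : V n = ⋃ m ∈ Finset.range n, lam' ⁻¹' {e2pi ((r m : ℝ))} := by
      ext x; simp [hVdef, Finset.mem_range]
    rw [this]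
    exact (Finset.range n).measurableSet_biUnion fun m _ =>
      hl'm.measurable (measurableSet_singleton _)
  have hVmono : Monotone V := by
    intro a b hab x ⟨m, hm, hx⟩
    exact ⟨m, lt_of_lt_of_le hm hab, hx⟩
  set E' : Set X := {x | ∃ q : ℚ, lam' x = e2pi (q : ℝ)} with hE'def
  have hE'eq : E' = ⋃ n, V n := by
    ext x
    constructor
    · rintro ⟨q, hq⟩
      obtain ⟨n, hn⟩ := hrsurj q
      exact Set.mem_iUnion.2 ⟨n + 1, n, Nat.lt_succ_self n, by rw [hn]; exact hq⟩
    · rintro hx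
      obtain ⟨n, m, _, hm⟩ := Set.mem_iUnion.1 hx
      exact ⟨r m, hm⟩
  have hmeasE' : MeasurableSet E' := by
    rw [hE'eq]; exact MeasurableSet.iUnion hVmeas
  intro ε hε
  set A : ℕ → Set X := fun n => E' \ V n with hAdef
  have hAmeas : ∀ n, MeasurableSet (A n) := fun n => hmeasE'.diff (hVmeas n)
  have htend : Tendsto (fun n => μ (A n)) atTop (𝓝 0) := by
    have hInter : (⋂ n, A n) = ∅ := by
      ext x
      simp only [Set.mem_iInter, Set.mem_empty_iff_false, iff_false]
      intro hx
      have hxE : x ∈ E' := (hx 0).1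
      rw [hE'eq] at hxE
      obtain ⟨n, hn⟩ := Set.mem_iUnion.1 hxE
      exact (hx n).2 hn
    have := tendsto_measure_iInter_atTop (μ := μ) (s := A)
      (fun n => (hAmeas n).nullMeasurableSet)
      (fun a b hab => Set.diff_subset_diff_right (hVmono hab))
      ⟨0, measure_ne_top μ _⟩
    rwa [hInter, measure_empty] at this
  have hδpos : (0:ℝ≥0∞) < ENNReal.ofReal ε ^ (2:ℝ) :=
    ENNReal.rpow_pos (ENNReal.ofReal_pos.2 hε) ENNReal.ofReal_ne_top
  obtain ⟨N, hN⟩ := (htend.eventually (gt_mem_nhds hδpos)).exists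
  -- the approximant
  set f : ℕ → X → ℂ := fun n => fun x => (V (n+1)).indicator χ x - (V n).indicator χ x
    with hfdef
  have hfmem : ∀ n, f n ∈ RatEig μ T := by
    intro n
    have heqD : f n = (V (n+1) \ V n).indicator χ := by
      funext x
      by_cases h1 : x ∈ V n
      · rw [hfdef]
        simp only
        rw [Set.indicator_of_mem (hVmono (Nat.le_succ n) h1), Set.indicator_of_mem h1,
          Set.indicator_of_notMem (fun hh => hh.2 h1), sub_self]
      · by_cases h2 : x ∈ V (n+1)
        · rw [hfdef]; simp only
          rw [Set.indicator_of_mem h2, Set.indicator_of_notMem h1,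
            Set.indicator_of_mem (show x ∈ V (n+1) \ V n from ⟨h2, h1⟩), sub_zero]
        · rw [hfdef]; simp only
          rw [Set.indicator_of_notMem h2, Set.indicator_of_notMem h1,
            Set.indicator_of_notMem (fun hh => h2 hh.1), sub_zero]
    rw [heqD]
    refine indicator_mem_ratEig μ T χ lam' hχ.aestronglyMeasurable hb hinv' hχT' _
      ((hVmeas (n+1)).diff (hVmeas n)) (r n) ?_ ?_
    · intro x h
      simp only [hVdef, Set.mem_diff, Set.mem_setOf_eq, h]
    · rintro x ⟨⟨m, hm, hx⟩, hnot⟩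
      have : m = n := by
        by_contra hne
        exact hnot ⟨m, by omega, hx⟩
      rwa [← this]
  refine ⟨fun x => ∑ n ∈ Finset.range N, f n x, ?_, ?_⟩
  · have : (fun x => ∑ n ∈ Finset.range N, f n x) = ∑ n ∈ Finset.range N, f n := by
      funext x; simp [Finset.sum_apply]
    rw [this]
    exact Submodule.sum_mem _ fun n _ => Submodule.subset_span (hfmem n)
  · have hsum : ∀ x, ∑ n ∈ Finset.range N, f n x = (V N).indicator χ x := by
      intro x
      rw [hfdef]
      simp only
      rw [Finset.sum_range_sub (f := fun n => (V n).indicator χ x)]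
      have : (V 0).indicator χ x = 0 := by
        apply Set.indicator_of_notMem
        rintro ⟨m, hm, -⟩; omega
      rw [this, sub_zero]
    have hae : (fun x => Set.indicator {x | ∃ q : ℚ, lam x = e2pi (q : ℝ)} χ x
        - ∑ n ∈ Finset.range N, f n x) =ᵐ[μ] (A N).indicator χ := by
      filter_upwards [hl] with x hx
      have hEE' : x ∈ {x | ∃ q : ℚ, lam x = e2pi (q : ℝ)} ↔ x ∈ E' := by
        simp only [Set.mem_setOf_eq, hE'def, hx]
      rw [hsum x]
      by_cases hxE : x ∈ E'
      · by_cases hxV : x ∈ V N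
        · rw [Set.indicator_of_mem (hEE'.2 hxE), Set.indicator_of_mem hxV,
            Set.indicator_of_notMem (fun hh => hh.2 hxV), sub_self]
        · rw [Set.indicator_of_mem (hEE'.2 hxE), Set.indicator_of_notMem hxV,
            Set.indicator_of_mem (show x ∈ A N from ⟨hxE, hxV⟩), sub_zero]
      · have hxV : x ∉ V N := fun hh => hxE (by rw [hE'eq]; exact Set.mem_iUnion.2 ⟨N, hh⟩)
        rw [Set.indicator_of_notMem (fun hh => hxE (hEE'.1 hh)),
          Set.indicator_of_notMem hxV, Set.indicator_of_notMem (fun hh => hxE hh.1),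
          sub_zero]
    rw [eLpNorm_congr_ae hae]
    calc eLpNorm ((A N).indicator χ) 2 μ
        ≤ eLpNorm ((A N).indicator (fun _ => (1:ℂ))) 2 μ := by
          apply eLpNorm_mono_ae
          filter_upwards [hb] with x hx
          by_cases h : x ∈ A N
          · rw [Set.indicator_of_mem h, Set.indicator_of_mem h]; simpa using hx
          · rw [Set.indicator_of_notMem h, Set.indicator_of_notMem h]
      _ = ‖(1:ℂ)‖₊ * μ (A N) ^ (1 / (2:ℝ≥0∞).toReal) :=
          eLpNorm_indicator_const (hAmeas N) two_ne_zero ENNReal.ofNat_ne_top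
      _ = μ (A N) ^ ((1:ℝ)/2) := by norm_num
      _ < ENNReal.ofReal ε := by
          have h2 := ENNReal.rpow_lt_rpow hN (by norm_num : (0:ℝ) < 1/2)
          rwa [← ENNReal.rpow_mul, show (2:ℝ) * (1/2) = 1 by norm_num,
            ENNReal.rpow_one] at h2

lemma stmt7_part2 (μ : Measure X) [IsProbabilityMeasure μ] (T : X → X)
    (hT : MeasurePreserving T μ μ) (χ lam : X → ℂ)
    (hχ : MemLp χ ⊤ μ) (hlam : AEStronglyMeasurable lam μ)
    (heig : IsNonergodicEigenfunction μ T χ lam) :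
    (∀ g ∈ Submodule.span ℂ (RatEig μ T),
      ∫ x, (χ x - Set.indicator {x | ∃ q : ℚ, lam x = e2pi (q : ℝ)} χ x) *
        (starRingEnd ℂ) (g x) ∂μ = 0) := by
  obtain ⟨h1, h2, h3, h4⟩ := heig
  have hχm : AEStronglyMeasurable χ μ := hχ.aestronglyMeasurable
  have hb : ∀ᵐ x ∂μ, ‖χ x‖ ≤ 1 := by
    filter_upwards [h1] with x hx
    rcases hx with h | h
    · simp [h]
    · simp [h]
  set E : Set X := {x | ∃ q : ℚ, lam x = e2pi (q : ℝ)} with hEdef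
  set f : X → ℂ := fun x => χ x - E.indicator χ x with hfdef
  -- measurability of f
  set lam' : X → ℂ := hlam.mk lam with hlam'def
  have hl : lam =ᵐ[μ] lam' := hlam.ae_eq_mk
  have hmeasE' : MeasurableSet {x | ∃ q : ℚ, lam' x = e2pi (q : ℝ)} := by
    have : {x | ∃ q : ℚ, lam' x = e2pi (q : ℝ)} = ⋃ q : ℚ, lam' ⁻¹' {e2pi (q : ℝ)} := by
      ext x; simp
    rw [this]
    exact MeasurableSet.iUnion fun q =>
      hlam.stronglyMeasurable_mk.measurable (measurableSet_singleton _)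
  have hfm : AEStronglyMeasurable f μ := by
    refine AEStronglyMeasurable.congr
      (f := fun x => χ x - ({x | ∃ q : ℚ, lam' x = e2pi (q : ℝ)}.indicator χ) x) ?_ ?_
    · exact hχm.sub (hχm.indicator hmeasE')
    · filter_upwards [hl] with x hx
      simp only [hfdef, hEdef, Set.mem_setOf_eq]
      congr 1
      by_cases h : ∃ q : ℚ, lam x = e2pi (q : ℝ)
      · rw [Set.indicator_of_mem (by simpa [hx] using h),
          Set.indicator_of_mem (by exact h)]
      · rw [Set.indicator_of_notMem (by simpa [hx] using h),
          Set.indicator_of_notMem (by exact h)]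
  have hfb : ∀ᵐ x ∂μ, ‖f x‖ ≤ 1 := by
    filter_upwards [hb] with x hx
    by_cases h : x ∈ E
    · simp [hfdef, Set.indicator_of_mem h]
    · simpa [hfdef, Set.indicator_of_notMem h] using hx
  have hfT : ∀ᵐ x ∂μ, f (T x) = lam x * f x := by
    filter_upwards [h2, h4] with x e2 e4
    by_cases h : x ∈ E
    · have hT' : T x ∈ E := by
        obtain ⟨q, hq⟩ := h; exact ⟨q, by rw [e2]; exact hq⟩
      simp [hfdef, Set.indicator_of_mem h, Set.indicator_of_mem hT']
    · have hT' : T x ∉ E := by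
        intro ⟨q, hq⟩; exact h ⟨q, by rw [← e2]; exact hq⟩
      simp only [hfdef, Set.indicator_of_mem, Set.indicator_of_notMem h,
        Set.indicator_of_notMem hT', sub_zero]
      rw [e4]
  have h1T : ∀ᵐ x ∂μ, χ (T x) = 0 ∨ ‖χ (T x)‖ = 1 :=
    hT.quasiMeasurePreserving.tendsto_ae.eventually h1
  have hfkey : ∀ᵐ x ∂μ, f x ≠ 0 → (‖lam x‖ ≤ 1 ∧ ∀ q : ℚ, lam x ≠ e2pi (q : ℝ)) := by
    filter_upwards [h1, h1T, h4] with x e1 e1T e4 hfx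
    have hxE : x ∉ E := by
      intro h
      exact hfx (by simp [hfdef, Set.indicator_of_mem h])
    have hχx : ‖χ x‖ = 1 := by
      rcases e1 with h | h
      · exact absurd (by simp [hfdef, h, Set.indicator_apply]) hfx
      · exact h
    constructor
    · have : ‖lam x‖ * ‖χ x‖ = ‖χ (T x)‖ := by rw [← norm_mul, e4]
      rcases e1T with h | h
      · rw [h] at this; simp only [norm_zero] at this
        simp only [hχx, mul_one] at this
        simp [this]
      · rw [h] at this
        simp only [hχx, mul_one] at this
        simp [this]
    · intro q hq
      exact hxE ⟨q, hq⟩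
  -- reduce to elements of RatEig with integrability bookkeeping
  intro g hg
  refine (Submodule.span_induction
    (p := fun g _ => MemLp g 2 μ ∧ ∫ x, f x * (starRingEnd ℂ) (g x) ∂μ = 0)
    ?_ ?_ ?_ ?_ hg).2
  · -- elements of RatEig
    rintro g ⟨hg2, q, hq⟩
    refine ⟨hg2, ?_⟩
    have hgm : AEStronglyMeasurable g μ := hg2.aestronglyMeasurable
    have hgi : Integrable g μ := hg2.integrable one_le_two
    have hgcm : AEStronglyMeasurable (fun x => (starRingEnd ℂ) (g x)) μ :=
      Complex.continuous_conj.comp_aestronglyMeasurable hgm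
    have hgci : Integrable (fun x => (starRingEnd ℂ) (g x)) μ :=
      Integrable.mono' hgi.norm hgcm
        (Eventually.of_forall fun x => by simp [RCLike.norm_conj])
    set w : X → ℂ := fun x => lam x * (starRingEnd ℂ) (e2pi (q : ℝ)) with hwdef
    have hwm : AEStronglyMeasurable w μ := hlam.mul_const _
    set c : ℂ := ∫ x, f x * (starRingEnd ℂ) (g x) ∂μ with hcdef
    have hwb : ∀ᵐ x ∂μ, f x ≠ 0 → ‖w x‖ ≤ 1 := by
      filter_upwards [hfkey] with x hx hfx
      rw [hwdef]
      simp only [norm_mul, RCLike.norm_conj, e2pi_abs, mul_one]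
      exact (hx hfx).1
    have hintaux : ∀ n : ℕ, Integrable (fun x => w x ^ n * (f x * (starRingEnd ℂ) (g x))) μ := by
      intro n
      have : (fun x => w x ^ n * (f x * (starRingEnd ℂ) (g x)))
          = fun x => (w x ^ n * f x) * (starRingEnd ℂ) (g x) := by
        funext x; ring
      rw [this]
      refine Integrable.bdd_mul (c := 1) hgci ((hwm.pow n).mul hfm) ?_
      filter_upwards [hfb, hwb] with x hx1 hx2
      by_cases hfx : f x = 0
      · simp [hfx]
      · rw [norm_mul, norm_pow]
        calc ‖w x‖ ^ n * ‖f x‖ ≤ 1 * 1 :=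
              mul_le_mul (pow_le_one₀ (norm_nonneg _) (hx2 hfx)) hx1 (norm_nonneg _) zero_le_one
        _ = 1 := by norm_num
    have hmeasn : ∀ n : ℕ,
        AEStronglyMeasurable (fun x => w x ^ n * (f x * (starRingEnd ℂ) (g x))) μ :=
      fun n => (hwm.pow n).mul (hfm.mul hgcm)
    have hclaim : ∀ n : ℕ, ∫ x, w x ^ n * (f x * (starRingEnd ℂ) (g x)) ∂μ = c := by
      intro n
      induction n with
      | zero => simp [hcdef]
      | succ n ih =>
        have hmap : ∫ x, w (T x) ^ n * (f (T x) * (starRingEnd ℂ) (g (T x))) ∂μ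
            = ∫ x, w x ^ n * (f x * (starRingEnd ℂ) (g x)) ∂μ := by
          have h0 := integral_map (φ := T) hT.measurable.aemeasurable
            (f := fun x => w x ^ n * (f x * (starRingEnd ℂ) (g x)))
            (by rw [hT.map_eq]; exact hmeasn n)
          rw [hT.map_eq] at h0
          exact h0.symm
        have hae : (fun x => w (T x) ^ n * (f (T x) * (starRingEnd ℂ) (g (T x))))
            =ᵐ[μ] fun x => w x ^ (n+1) * (f x * (starRingEnd ℂ) (g x)) := by
          filter_upwards [h2, hfT, hq] with x e2 efT eq
          simp only [hwdef]
          rw [e2, efT, eq, map_mul]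
          ring
        rw [← integral_congr_ae hae, hmap, ih]
    -- Cesàro averaging
    set F : ℕ → X → ℂ := fun N x =>
      (N:ℂ)⁻¹ * ((∑ n ∈ Finset.range N, w x ^ n) * (f x * (starRingEnd ℂ) (g x))) with hFdef
    have hFc : ∀ N : ℕ, 1 ≤ N → ∫ x, F N x ∂μ = c := by
      intro N hN
      have hNne : (N:ℂ) ≠ 0 := Nat.cast_ne_zero.2 (by omega)
      have hdist : (fun x => (∑ n ∈ Finset.range N, w x ^ n) * (f x * (starRingEnd ℂ) (g x)))
          = fun x => ∑ n ∈ Finset.range N, w x ^ n * (f x * (starRingEnd ℂ) (g x)) := by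
        funext x; rw [Finset.sum_mul]
      calc ∫ x, F N x ∂μ
          = (N:ℂ)⁻¹ * ∫ x, (∑ n ∈ Finset.range N, w x ^ n) *
              (f x * (starRingEnd ℂ) (g x)) ∂μ := by
            simp only [hFdef]; exact integral_const_mul _ _
        _ = (N:ℂ)⁻¹ * ∑ n ∈ Finset.range N,
              ∫ x, w x ^ n * (f x * (starRingEnd ℂ) (g x)) ∂μ := by
            rw [hdist, integral_finset_sum _ fun n _ => hintaux n]
        _ = (N:ℂ)⁻¹ * ((N:ℂ) * c) := by
            rw [Finset.sum_congr rfl fun n _ => hclaim n, Finset.sum_const,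
              Finset.card_range, nsmul_eq_mul]
        _ = c := by rw [← mul_assoc, inv_mul_cancel₀ hNne, one_mul]
    have htendc : Tendsto (fun N => ∫ x, F N x ∂μ) atTop (𝓝 c) := by
      refine Tendsto.congr' ?_ tendsto_const_nhds
      filter_upwards [eventually_ge_atTop 1] with N hN
      exact (hFc N hN).symm
    have htend0 : Tendsto (fun N => ∫ x, F N x ∂μ) atTop (𝓝 0) := by
      have key : Tendsto (fun N => ∫ x, F N x ∂μ) atTop (𝓝 (∫ _x, (0:ℂ) ∂μ)) := by
        refine tendsto_integral_of_dominated_convergence (bound := fun x => ‖g x‖)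
          ?_ hgi.norm ?_ ?_
        · intro N
          exact aestronglyMeasurable_const.mul
            (((Finset.range N).aestronglyMeasurable_fun_sum fun n _ => hwm.pow n).mul
              (hfm.mul hgcm))
        · intro N
          filter_upwards [hfb, hwb] with x hx1 hx2
          by_cases hfx : f x = 0
          · simp [hFdef, hfx]
          · have hS : ‖∑ n ∈ Finset.range N, w x ^ n‖ ≤ (N:ℝ) := by
              calc ‖∑ n ∈ Finset.range N, w x ^ n‖
                  ≤ ∑ n ∈ Finset.range N, ‖w x ^ n‖ := norm_sum_le _ _
                _ ≤ ∑ _n ∈ Finset.range N, 1 := Finset.sum_le_sum fun n _ => by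
                    rw [norm_pow]; exact pow_le_one₀ (norm_nonneg _) (hx2 hfx)
                _ = N := by simp
            have hP : ‖f x * (starRingEnd ℂ) (g x)‖ ≤ ‖g x‖ := by
              rw [norm_mul, RCLike.norm_conj]
              calc ‖f x‖ * ‖g x‖ ≤ 1 * ‖g x‖ :=
                    mul_le_mul_of_nonneg_right hx1 (norm_nonneg _)
                _ = ‖g x‖ := one_mul _
            calc ‖F N x‖
                = (N:ℝ)⁻¹ * (‖∑ n ∈ Finset.range N, w x ^ n‖ *
                    ‖f x * (starRingEnd ℂ) (g x)‖) := by
                  rw [hFdef]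
                  simp only
                  rw [norm_mul, norm_mul, norm_inv, Complex.norm_natCast]
              _ ≤ (N:ℝ)⁻¹ * ((N:ℝ) * ‖g x‖) := by
                  have h0 : (0:ℝ) ≤ (N:ℝ)⁻¹ := by positivity
                  exact mul_le_mul_of_nonneg_left
                    (mul_le_mul hS hP (norm_nonneg _) (Nat.cast_nonneg N)) h0
              _ = ((N:ℝ)⁻¹ * (N:ℝ)) * ‖g x‖ := by ring
              _ ≤ 1 * ‖g x‖ := by
                  refine mul_le_mul_of_nonneg_right ?_ (norm_nonneg _)
                  rcases Nat.eq_zero_or_pos N with h | h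
                  · simp [h]
                  · rw [inv_mul_cancel₀ (by exact_mod_cast h.ne' : (N:ℝ) ≠ 0)]
              _ = ‖g x‖ := one_mul _
        · filter_upwards [hfkey] with x hx
          by_cases hfx : f x = 0
          · have : (fun N => F N x) = fun _ => (0:ℂ) := by
              funext N; simp [hFdef, hfx]
            rw [this]; exact tendsto_const_nhds
          · obtain ⟨hle, hne⟩ := hx hfx
            have hw1 : ‖w x‖ ≤ 1 := by
              rw [hwdef]
              simp only [norm_mul, RCLike.norm_conj,
                e2pi_abs, mul_one]
              exact hle
            have hwne : w x ≠ 1 := by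
              intro h
              apply hne q
              have h' : lam x * (starRingEnd ℂ) (e2pi (q:ℝ)) = 1 := by
                rw [hwdef] at h; exact h
              have h2' : lam x = (lam x * (starRingEnd ℂ) (e2pi (q:ℝ))) * e2pi (q:ℝ) := by
                rw [mul_assoc, mul_comm ((starRingEnd ℂ) _), conj_e2pi_mul, mul_one]
              rw [h', one_mul] at h2'
              exact h2'
            have hlim := (cesaro (w x) hw1 hwne).mul_const (f x * (starRingEnd ℂ) (g x))
            rw [zero_mul] at hlim
            have : (fun N => F N x)
                = fun N : ℕ => ((N:ℂ)⁻¹ * ∑ n ∈ Finset.range N, w x ^ n) *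
                    (f x * (starRingEnd ℂ) (g x)) := by
              funext N; rw [hFdef]; ring
            rw [this]
            exact hlim
      simpa using key
    exact tendsto_nhds_unique htendc htend0
  · exact ⟨MemLp.zero, by simp⟩
  · rintro a b ha hb ⟨ha1, ha2⟩ ⟨hb1, hb2⟩
    refine ⟨ha1.add hb1, ?_⟩
    have hrw : (fun x => f x * (starRingEnd ℂ) ((a + b) x))
        = fun x => f x * (starRingEnd ℂ) (a x) + f x * (starRingEnd ℂ) (b x) := by
      funext x; simp [Pi.add_apply, map_add, mul_add]
    have hinta : Integrable (fun x => f x * (starRingEnd ℂ) (a x)) μ := by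
      refine Integrable.bdd_mul (c := 1) ?_ hfm hfb
      refine Integrable.mono' (ha1.integrable one_le_two).norm
        (Complex.continuous_conj.comp_aestronglyMeasurable ha1.aestronglyMeasurable)
        (Eventually.of_forall fun x => by simp [RCLike.norm_conj])
    have hintb : Integrable (fun x => f x * (starRingEnd ℂ) (b x)) μ := by
      refine Integrable.bdd_mul (c := 1) ?_ hfm hfb
      refine Integrable.mono' (hb1.integrable one_le_two).norm
        (Complex.continuous_conj.comp_aestronglyMeasurable hb1.aestronglyMeasurable)
        (Eventually.of_forall fun x => by simp [RCLike.norm_conj])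
    rw [hrw, integral_add hinta hintb, ha2, hb2, add_zero]
  · rintro r a ha ⟨ha1, ha2⟩
    refine ⟨ha1.const_smul r, ?_⟩
    have hrw : (fun x => f x * (starRingEnd ℂ) ((r • a) x))
        = fun x => (starRingEnd ℂ) r * (f x * (starRingEnd ℂ) (a x)) := by
      funext x; simp [Pi.smul_apply, smul_eq_mul, map_mul]; ring
    rw [hrw, integral_const_mul, ha2, mul_zero]

lemma stmt7_part34 (μ : Measure X) (T : X → X) (χ lam : X → ℂ)
    (heig : IsNonergodicEigenfunction μ T χ lam) :
    (∃ lamQ : X → ℂ, IsNonergodicEigenfunction μ T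
      (Set.indicator {x | ∃ q : ℚ, lam x = e2pi (q : ℝ)} χ) lamQ) ∧
    (∃ lam' : X → ℂ, IsNonergodicEigenfunction μ T
      (fun x => χ x - Set.indicator {x | ∃ q : ℚ, lam x = e2pi (q : ℝ)} χ x) lam') := by
  set E : Set X := {x | ∃ q : ℚ, lam x = e2pi (q : ℝ)} with hEdef
  have hE : ∀ x, lam (T x) = lam x → (x ∈ E ↔ T x ∈ E) := by
    intro x h; simp only [hEdef, Set.mem_setOf_eq, h]
  have hEc : ∀ x, lam (T x) = lam x → (x ∈ Eᶜ ↔ T x ∈ Eᶜ) := by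
    intro x h; simp only [Set.mem_compl_iff, hE x h]
  have hfun : (fun x => χ x - E.indicator χ x) = Eᶜ.indicator χ := by
    funext x
    by_cases h : x ∈ E
    · rw [Set.indicator_of_mem h, Set.indicator_of_notMem (by simpa using h), sub_self]
    · rw [Set.indicator_of_notMem h, Set.indicator_of_mem (by simpa using h), sub_zero]
  exact ⟨⟨E.indicator lam, indicator_eigen heig E hE⟩,
    ⟨Eᶜ.indicator lam, hfun ▸ indicator_eigen heig Eᶜ hEc⟩⟩

theorem stmt7 (μ : Measure X) [IsProbabilityMeasure μ] (T : X → X)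
    (hT : MeasurePreserving T μ μ) (χ lam : X → ℂ)
    (hχ : MemLp χ ⊤ μ) (hlam : AEStronglyMeasurable lam μ)
    (heig : IsNonergodicEigenfunction μ T χ lam) :
    InKrat μ T (Set.indicator {x | ∃ q : ℚ, lam x = e2pi (q : ℝ)} χ) ∧
    (∀ g ∈ Submodule.span ℂ (RatEig μ T),
      ∫ x, (χ x - Set.indicator {x | ∃ q : ℚ, lam x = e2pi (q : ℝ)} χ x) *
        (starRingEnd ℂ) (g x) ∂μ = 0) ∧
    (∃ lamQ : X → ℂ, IsNonergodicEigenfunction μ T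
      (Set.indicator {x | ∃ q : ℚ, lam x = e2pi (q : ℝ)} χ) lamQ) ∧
    (∃ lam' : X → ℂ, IsNonergodicEigenfunction μ T
      (fun x => χ x - Set.indicator {x | ∃ q : ℚ, lam x = e2pi (q : ℝ)} χ x) lam') :=
  ⟨stmt7_part1 μ T hT χ lam hχ hlam heig, stmt7_part2 μ T hT χ lam hχ hlam heig,
   (stmt7_part34 μ T χ lam heig).1, (stmt7_part34 μ T χ lam heig).2⟩
end
end
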